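/- Let ε = (ε_1, …, ε_d) be a random vector with independent standard normal coordinates, let μ ∈ ℝ^d be a fixed vector, set M = μ + ε, and let A be a fixed real d×d matrix. Then E(‖μ − A M‖²) = E(‖M − A M‖²) − d + 2 tr(A), where ‖·‖ is the Euclidean norm. -/

import Mathlib

open MeasureTheory ProbabilityTheory Matrix Real Filter

namespace ExpectedSquaredErrorAux

lemma pdf01 (x : ℝ) : gaussianPDFReal 0 1 x = (√(2*π))⁻¹ * Real.exp (-(2⁻¹) * x^2) := by
  simp [gaussianPDFReal]; ring_nf; exact Or.inl trivial

lemma pdf01_nn : ∀ x, 0 ≤ gaussianPDFReal 0 1 x := fun x => gaussianPDFReal_nonneg 0 1 x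

lemma meas_pdf : Measurable (fun x => (gaussianPDFReal 0 1 x).toNNReal) :=
  (measurable_gaussianPDFReal 0 1).real_toNNReal

lemma gauss_eq : gaussianReal 0 1
    = volume.withDensity (fun x => ((gaussianPDFReal 0 1 x).toNNReal : ENNReal)) := by
  rw [gaussianReal_of_var_ne_zero 0 one_ne_zero]
  rfl

lemma integral_gauss (g : ℝ → ℝ) :
    ∫ x, g x ∂(gaussianReal 0 1) = ∫ x, gaussianPDFReal 0 1 x * g x := by
  rw [gauss_eq, integral_withDensity_eq_integral_smul meas_pdf]
  congr 1; funext x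
  simp [NNReal.smul_def, Real.coe_toNNReal _ (pdf01_nn x)]

lemma integrable_gauss_iff (g : ℝ → ℝ) :
    Integrable g (gaussianReal 0 1) ↔ Integrable (fun x => gaussianPDFReal 0 1 x * g x) := by
  rw [gauss_eq, integrable_withDensity_iff_integrable_smul meas_pdf]
  constructor <;> intro h <;> refine h.congr (Eventually.of_forall fun x => ?_) <;>
    simp [NNReal.smul_def, Real.coe_toNNReal _ (pdf01_nn x)]

lemma int_exp : Integrable (fun x : ℝ => rexp (-(2⁻¹ : ℝ) * x^2)) :=
  integrable_exp_neg_mul_sq (by norm_num)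

lemma int_x_exp : Integrable (fun x : ℝ => x * rexp (-(2⁻¹ : ℝ) * x^2)) := by
  have := integrable_rpow_mul_exp_neg_mul_sq (b := 2⁻¹) (by norm_num) (s := 1) (by norm_num)
  simpa [Real.rpow_one] using this

lemma int_x2_exp : Integrable (fun x : ℝ => x^2 * rexp (-(2⁻¹ : ℝ) * x^2)) := by
  have := integrable_rpow_mul_exp_neg_mul_sq (b := 2⁻¹) (by norm_num) (s := 2) (by norm_num)
  have h : ∀ x : ℝ, x ^ (2:ℝ) = x ^ (2:ℕ) := fun x => by
    rw [← Real.rpow_natCast x 2]; norm_num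
  simpa [h] using this

lemma tendsto_exp_top : Tendsto (fun x : ℝ => rexp (-(2⁻¹:ℝ) * x^2)) atTop (nhds 0) := by
  apply Real.tendsto_exp_atBot.comp
  apply Filter.Tendsto.const_mul_atTop_of_neg (by norm_num : (-(2⁻¹:ℝ)) < 0)
  exact tendsto_pow_atTop (by norm_num)

lemma tendsto_exp_bot : Tendsto (fun x : ℝ => rexp (-(2⁻¹:ℝ) * x^2)) atBot (nhds 0) := by
  have := tendsto_exp_top.comp tendsto_neg_atBot_atTop
  exact this.congr fun x => by simp [Function.comp, neg_sq]

lemma tendsto_x_exp_top : Tendsto (fun x : ℝ => x * rexp (-(2⁻¹:ℝ) * x^2)) atTop (nhds 0) := by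
  have h := rpow_mul_exp_neg_mul_sq_isLittleO_exp_neg (b := 2⁻¹) (by norm_num) 1
  have h2 : Tendsto (fun x : ℝ => rexp (-(1/2) * x)) atTop (nhds 0) := by
    apply Real.tendsto_exp_atBot.comp
    exact Filter.Tendsto.const_mul_atTop_of_neg (by norm_num) tendsto_id
  have := h.trans_tendsto h2
  rw [show (fun x : ℝ => x ^ (1:ℝ) * rexp (-2⁻¹ * x ^ 2)) = (fun x : ℝ => x * rexp (-2⁻¹ * x ^ 2))
    from funext fun x => by rw [Real.rpow_one]] at this
  exact this

lemma tendsto_x_exp_bot : Tendsto (fun x : ℝ => x * rexp (-(2⁻¹:ℝ) * x^2)) atBot (nhds 0) := by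
  have := (tendsto_x_exp_top.comp tendsto_neg_atBot_atTop).neg
  rw [neg_zero] at this
  exact this.congr fun x => by simp [Function.comp, neg_sq]

lemma integral_x_exp : ∫ x : ℝ, x * rexp (-(2⁻¹:ℝ) * x^2) = 0 := by
  have h : ∀ x : ℝ, HasDerivAt (fun y : ℝ => -rexp (-(2⁻¹:ℝ) * y^2))
      (x * rexp (-(2⁻¹:ℝ) * x^2)) x := by
    intro x
    have h1 : HasDerivAt (fun y : ℝ => -(2⁻¹:ℝ) * y^2) (-(2⁻¹:ℝ) * (2 * x)) x :=
      ((hasDerivAt_pow 2 x).const_mul _).congr_deriv (by ring)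
    have := (h1.exp).neg
    exact this.congr_deriv (by ring)
  have := integral_of_hasDerivAt_of_tendsto h int_x_exp tendsto_exp_bot.neg tendsto_exp_top.neg
  simpa using this

lemma integral_x2_exp : ∫ x : ℝ, x^2 * rexp (-(2⁻¹:ℝ) * x^2) = √(2*π) := by
  have h : ∀ x : ℝ, HasDerivAt (fun y : ℝ => -(y * rexp (-(2⁻¹:ℝ) * y^2)))
      (x^2 * rexp (-(2⁻¹:ℝ) * x^2) - rexp (-(2⁻¹:ℝ) * x^2)) x := by
    intro x
    have h1 : HasDerivAt (fun y : ℝ => -(2⁻¹:ℝ) * y^2) (-(2⁻¹:ℝ) * (2 * x)) x :=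
      ((hasDerivAt_pow 2 x).const_mul _).congr_deriv (by ring)
    have h2 := (hasDerivAt_id x).mul h1.exp
    have := h2.neg
    exact this.congr_deriv (by simp only [id]; ring)
  have hint : Integrable (fun x : ℝ => x^2 * rexp (-(2⁻¹:ℝ) * x^2) - rexp (-(2⁻¹:ℝ) * x^2)) :=
    int_x2_exp.sub int_exp
  have := integral_of_hasDerivAt_of_tendsto h hint tendsto_x_exp_bot.neg tendsto_x_exp_top.neg
  rw [integral_sub int_x2_exp int_exp] at this
  have hg : ∫ x : ℝ, rexp (-(2⁻¹:ℝ) * x^2) = √(2*π) := by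
    have := integral_gaussian 2⁻¹
    rw [show π / (2⁻¹:ℝ) = 2 * π by ring] at this
    exact this
  rw [hg] at this
  linarith [this]

lemma sqrt2pi_pos : (0:ℝ) < √(2*π) := Real.sqrt_pos.2 (by positivity)

lemma gint1 : Integrable (fun x : ℝ => x) (gaussianReal 0 1) := by
  rw [integrable_gauss_iff]
  refine (int_x_exp.const_mul ((√(2*π))⁻¹)).congr (Eventually.of_forall fun x => ?_)
  simp only [pdf01]; ring

lemma gint2 : Integrable (fun x : ℝ => x^2) (gaussianReal 0 1) := by
  rw [integrable_gauss_iff]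
  refine (int_x2_exp.const_mul ((√(2*π))⁻¹)).congr (Eventually.of_forall fun x => ?_)
  simp only [pdf01]; ring

lemma gmoment1 : ∫ x : ℝ, x ∂(gaussianReal 0 1) = 0 := by
  rw [integral_gauss]
  have : (fun x : ℝ => gaussianPDFReal 0 1 x * x)
      = fun x : ℝ => (√(2*π))⁻¹ * (x * rexp (-(2⁻¹:ℝ) * x^2)) := funext fun x => by
    rw [pdf01]; ring
  rw [this, integral_const_mul, integral_x_exp, mul_zero]

lemma gmoment2 : ∫ x : ℝ, x^2 ∂(gaussianReal 0 1) = 1 := by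
  rw [integral_gauss]
  have : (fun x : ℝ => gaussianPDFReal 0 1 x * x^2)
      = fun x : ℝ => (√(2*π))⁻¹ * (x^2 * rexp (-(2⁻¹:ℝ) * x^2))  := funext fun x => by
    rw [pdf01]; ring
  rw [this, integral_const_mul, integral_x2_exp, inv_mul_cancel₀ sqrt2pi_pos.ne']

lemma pi_integral_prod {d : ℕ} (p : Measure ℝ) [IsProbabilityMeasure p] (f : Fin d → ℝ → ℝ) :
    ∫ x : Fin d → ℝ, ∏ i, f i (x i) ∂(Measure.pi fun _ => p) = ∏ i, ∫ t, f i t ∂p := by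
  letI : MeasureSpace ℝ := ⟨p⟩
  exact MeasureTheory.integral_fintype_prod_eq_prod f

lemma pi_integrable_prod {d : ℕ} (p : Measure ℝ) [IsProbabilityMeasure p] (f : Fin d → ℝ → ℝ)
    (hf : ∀ i, Integrable (f i) p) :
    Integrable (fun x : Fin d → ℝ => ∏ i, f i (x i)) (Measure.pi fun _ => p) := by
  letI : MeasureSpace ℝ := ⟨p⟩
  exact MeasureTheory.Integrable.fintype_prod hf

noncomputable def P (d : ℕ) : Measure (Fin d → ℝ) := Measure.pi fun _ => gaussianReal 0 1

instance (d : ℕ) : IsProbabilityMeasure (P d) := by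
  unfold P; infer_instance

lemma prod_eval {d : ℕ} (i : Fin d) (x : Fin d → ℝ) :
    ∏ k, (if k = i then x k else 1) = x i := by
  simp [Finset.prod_ite_eq']

lemma pi_int1 {d : ℕ} (i : Fin d) : Integrable (fun x : Fin d → ℝ => x i) (P d) := by
  have := pi_integrable_prod (gaussianReal 0 1) (fun k t => if k = i then t else 1) ?_
  · refine this.congr (Eventually.of_forall fun x => ?_)
    simp [prod_eval]
  · intro k
    by_cases h : k = i <;> simp [h, gint1]

lemma pi_int2 {d : ℕ} (i j : Fin d) :
    Integrable (fun x : Fin d → ℝ => x i * x j) (P d) := by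
  have := pi_integrable_prod (gaussianReal 0 1)
    (fun k t => (if k = i then t else 1) * (if k = j then t else 1)) ?_
  · refine this.congr (Eventually.of_forall fun x => ?_)
    simp only [Finset.prod_mul_distrib, prod_eval]
  · intro k
    rcases eq_or_ne k i with hi | hi <;> rcases eq_or_ne k j with hj | hj
    · subst hi; subst hj; simpa [← sq] using gint2
    · subst hi; simpa [hj] using gint1
    · subst hj; simpa [hi] using gint1
    · simpa [hi, hj] using integrable_const (1:ℝ)

lemma pi_m1 {d : ℕ} (i : Fin d) : ∫ x, x i ∂(P d) = 0 := by
  have := pi_integral_prod (gaussianReal 0 1) (fun k t => if k = i then t else 1)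
  have hl : (fun x : Fin d → ℝ => ∏ k, (if k = i then x k else 1)) = fun x => x i :=
    funext fun x => prod_eval i x
  rw [P, ← hl, this]
  refine Finset.prod_eq_zero (Finset.mem_univ i) ?_
  simp [gmoment1]

lemma pi_m2 {d : ℕ} (i j : Fin d) :
    ∫ x, x i * x j ∂(P d) = if i = j then 1 else 0 := by
  have key := pi_integral_prod (gaussianReal 0 1)
    (fun k t => (if k = i then t else 1) * (if k = j then t else 1))
  have hl : (fun x : Fin d → ℝ => ∏ k, ((if k = i then x k else 1) * (if k = j then x k else 1)))
      = fun x => x i * x j := funext fun x => by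
    simp only [Finset.prod_mul_distrib, prod_eval]
  rw [P, ← hl, key]
  by_cases hij : i = j
  · subst hij
    refine (Finset.prod_eq_one fun k _ => ?_).trans (if_pos rfl).symm
    by_cases h : k = i
    · subst h; simpa [← sq] using gmoment2
    · simp [h]
  · rw [if_neg hij]
    refine Finset.prod_eq_zero (Finset.mem_univ i) ?_
    simp [if_neg hij, gmoment1]

lemma keyP {d : ℕ} (c : Fin d → ℝ) (C : Matrix (Fin d) (Fin d) ℝ) :
    ∫ x, (c + C *ᵥ x) ⬝ᵥ (c + C *ᵥ x) ∂(P d)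
      = c ⬝ᵥ c + ∑ i, ∑ j, (C i j)^2 := by
  have I1 : ∀ coef : Fin d → ℝ, Integrable (fun x : Fin d → ℝ => ∑ j, coef j * x j) (P d) :=
    fun coef => integrable_finset_sum _ fun j _ => (pi_int1 j).const_mul _
  have I2 : ∀ i, Integrable
      (fun x : Fin d → ℝ => ∑ j, ∑ k, (C i j * C i k) * (x j * x k)) (P d) :=
    fun i => integrable_finset_sum _ fun j _ =>
      integrable_finset_sum _ fun k _ => (pi_int2 j k).const_mul _
  have hfun : (fun x : Fin d → ℝ => (c + C *ᵥ x) ⬝ᵥ (c + C *ᵥ x))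
      = fun x => ∑ i, ((c i)^2 + 2 * c i * (∑ j, C i j * x j)
          + ∑ j, ∑ k, (C i j * C i k) * (x j * x k)) := by
    funext x
    unfold dotProduct
    refine Finset.sum_congr rfl fun i _ => ?_
    have hmv : (C *ᵥ x) i = ∑ j, C i j * x j := rfl
    have hsq : (∑ j, C i j * x j) * (∑ k, C i k * x k)
        = ∑ j, ∑ k, (C i j * C i k) * (x j * x k) := by
      rw [Finset.sum_mul_sum]
      exact Finset.sum_congr rfl fun j _ => Finset.sum_congr rfl fun k _ => by ring
    simp only [Pi.add_apply, hmv]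
    rw [← hsq]; ring
  rw [hfun, integral_finset_sum _ (fun (i : Fin d) _ =>
    show Integrable (fun x : Fin d → ℝ => (c i)^2 + 2 * c i * (∑ j, C i j * x j)
          + ∑ j, ∑ k, (C i j * C i k) * (x j * x k)) (P d) from
    ((integrable_const _).add ((I1 _).const_mul _)).add (I2 i))]
  have hterm : ∀ i, ∫ x, ((c i)^2 + 2 * c i * (∑ j, C i j * x j)
      + ∑ j, ∑ k, (C i j * C i k) * (x j * x k)) ∂(P d)
      = (c i)^2 + ∑ j, (C i j)^2 := by
    intro i
    rw [integral_add (show Integrable (fun x : Fin d → ℝ =>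
          (c i)^2 + 2 * c i * (∑ j, C i j * x j)) (P d) from
        (integrable_const _).add ((I1 _).const_mul _)) (I2 i),
      integral_add (integrable_const _)
        (show Integrable (fun x : Fin d → ℝ => 2 * c i * (∑ j, C i j * x j)) (P d) from
          (I1 _).const_mul _),
      integral_const, integral_const_mul,
      integral_finset_sum _ (fun (j : Fin d) _ =>
        show Integrable (fun x : Fin d → ℝ => C i j * x j) (P d) from (pi_int1 j).const_mul _)]
    have h1 : ∑ j, ∫ x, C i j * x j ∂(P d) = 0 := by
      refine Finset.sum_eq_zero fun j _ => ?_
      rw [integral_const_mul, pi_m1, mul_zero]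
    have h2 : ∫ x, (∑ j, ∑ k, (C i j * C i k) * (x j * x k)) ∂(P d) = ∑ j, (C i j)^2 := by
      rw [integral_finset_sum _ (fun j _ =>
        integrable_finset_sum _ fun k _ => (pi_int2 j k).const_mul _)]
      refine Finset.sum_congr rfl fun j _ => ?_
      rw [integral_finset_sum _ (fun k _ => (pi_int2 j k).const_mul _)]
      have : ∀ k, ∫ x, (C i j * C i k) * (x j * x k) ∂(P d)
          = (C i j * C i k) * (if j = k then 1 else 0) := fun k => by
        rw [integral_const_mul, pi_m2]
      simp only [this, mul_ite, mul_one, mul_zero]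
      rw [Finset.sum_ite_eq (Finset.univ) j (fun k => C i j * C i k)]
      simp [sq]
    rw [h1, h2]
    simp [measure_univ]
  simp only [hterm]
  rw [Finset.sum_add_distrib]
  congr 1
  simp [dotProduct, sq]

end ExpectedSquaredErrorAux

open ExpectedSquaredErrorAux in
/-- If `ε` is a random vector in `ℝ^d` with independent standard normal coordinates,
`M = μvec + ε`, and `A` is a fixed `d × d` real matrix, then
`E(‖μvec − A M‖²) = E(‖M − A M‖²) − d + 2 tr(A)`, where `‖x‖² = x ⬝ᵥ x` is the
squared Euclidean norm. -/
theorem expected_squared_error_identity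
    {Ω : Type*} [MeasurableSpace Ω] (μ : Measure Ω) [IsProbabilityMeasure μ]
    {d : ℕ} (ε : Ω → (Fin d → ℝ)) (hmeas : Measurable ε)
    (hlaw : Measure.map ε μ = Measure.pi (fun _ : Fin d => gaussianReal 0 1))
    (μvec : Fin d → ℝ) (M : Ω → (Fin d → ℝ)) (hM : ∀ ω, M ω = μvec + ε ω)
    (A : Matrix (Fin d) (Fin d) ℝ) :
    ∫ ω, (μvec - A *ᵥ (M ω)) ⬝ᵥ (μvec - A *ᵥ (M ω)) ∂μ
      = (∫ ω, (M ω - A *ᵥ (M ω)) ⬝ᵥ (M ω - A *ᵥ (M ω)) ∂μ) - d + 2 * A.trace := by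
  have hlawP : Measure.map ε μ = P d := hlaw
  set b : Fin d → ℝ := μvec - A *ᵥ μvec with hb
  -- Change of variables: for any affine quadratic form, reduce to an integral over `P d`.
  have hcv : ∀ (C : Matrix (Fin d) (Fin d) ℝ),
      ∫ ω, (b + C *ᵥ ε ω) ⬝ᵥ (b + C *ᵥ ε ω) ∂μ = b ⬝ᵥ b + ∑ i, ∑ j, (C i j)^2 := by
    intro C
    have hF : Continuous fun x : Fin d → ℝ => (b + C *ᵥ x) ⬝ᵥ (b + C *ᵥ x) := by
      simp only [dotProduct, Matrix.mulVec, Pi.add_apply]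
      fun_prop
    have hmap : ∫ ω, (b + C *ᵥ ε ω) ⬝ᵥ (b + C *ᵥ ε ω) ∂μ
        = ∫ x, (b + C *ᵥ x) ⬝ᵥ (b + C *ᵥ x) ∂(P d) := by
      rw [← hlawP, integral_map hmeas.aemeasurable hF.aestronglyMeasurable]
    rw [hmap, keyP]
  have hL : ∫ ω, (μvec - A *ᵥ (M ω)) ⬝ᵥ (μvec - A *ᵥ (M ω)) ∂μ
      = b ⬝ᵥ b + ∑ i, ∑ j, (A i j)^2 := by
    have heq : ∀ ω, μvec - A *ᵥ (M ω) = b + (-A) *ᵥ ε ω := by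
      intro ω
      rw [hM, Matrix.mulVec_add, Matrix.neg_mulVec, hb]
      abel
    calc ∫ ω, (μvec - A *ᵥ (M ω)) ⬝ᵥ (μvec - A *ᵥ (M ω)) ∂μ
        = ∫ ω, (b + (-A) *ᵥ ε ω) ⬝ᵥ (b + (-A) *ᵥ ε ω) ∂μ := by
          simp only [heq]
      _ = b ⬝ᵥ b + ∑ i, ∑ j, ((-A) i j)^2 := hcv (-A)
      _ = b ⬝ᵥ b + ∑ i, ∑ j, (A i j)^2 := by
          simp [Matrix.neg_apply]
  have hR : ∫ ω, (M ω - A *ᵥ (M ω)) ⬝ᵥ (M ω - A *ᵥ (M ω)) ∂μ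
      = b ⬝ᵥ b + ∑ i, ∑ j, ((1 - A) i j)^2 := by
    have heq : ∀ ω, M ω - A *ᵥ (M ω) = b + (1 - A) *ᵥ ε ω := by
      intro ω
      rw [hM, Matrix.mulVec_add, Matrix.sub_mulVec, Matrix.one_mulVec, hb]
      abel
    calc ∫ ω, (M ω - A *ᵥ (M ω)) ⬝ᵥ (M ω - A *ᵥ (M ω)) ∂μ
        = ∫ ω, (b + (1 - A) *ᵥ ε ω) ⬝ᵥ (b + (1 - A) *ᵥ ε ω) ∂μ := by
          simp only [heq]
      _ = b ⬝ᵥ b + ∑ i, ∑ j, ((1 - A) i j)^2 := hcv (1 - A)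
  rw [hL, hR]
  have hsum : ∑ i, ∑ j, ((1 - A : Matrix (Fin d) (Fin d) ℝ) i j)^2
      = (∑ i, ∑ j, (A i j)^2) + (d : ℝ) - 2 * A.trace := by
    have h1 : ∀ i j, ((1 - A : Matrix (Fin d) (Fin d) ℝ) i j)^2
        = (A i j)^2 + ((if i = j then (1:ℝ) else 0) - 2 * (if i = j then A i j else 0)) := by
      intro i j
      by_cases h : i = j <;> simp [Matrix.sub_apply, Matrix.one_apply, h] <;> ring
    simp only [h1, Finset.sum_add_distrib, Finset.sum_sub_distrib, ← Finset.mul_sum,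
      Finset.sum_ite_eq (Finset.univ), Finset.mem_univ, if_true]
    have htr : A.trace = ∑ i, A i i := rfl
    simp [htr, Finset.mul_sum, Finset.sum_sub_distrib]
    ring
  rw [hsum]
  ring
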